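/- Let 𝔤 = 𝔨 ⊕ 𝔭 be the Cartan decomposition of a compact semisimple Lie algebra with respect to an involution, and suppose A : 𝔭 → 𝔭 is an orthogonal transformation (with respect to the negative of the Killing form) and φ_A : 𝔨 → 𝔨 a Lie algebra automorphism satisfying A∘ad(X)|_𝔭∘A⁻¹ = ad(φ_A(X))|_𝔭 for all X ∈ 𝔨. Then the linear map φ : 𝔤 → 𝔤 defined by φ|_𝔨 = φ_A, φ|_𝔭 = A is a Lie algebra automorphism of 𝔤. -/

import Mathlib

/-- Let `𝔤 = 𝔨 ⊕ 𝔭` be an effective Cartan decomposition of a compact semisimple real Lie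
algebra (negative definite Killing form), and let `φ : 𝔤 → 𝔤` be a linear bijection
preserving `𝔨` and `𝔭`, restricting to a Lie algebra automorphism on `𝔨`, orthogonal on `𝔭`
with respect to (minus) the Killing form, and intertwining the adjoint action in the sense
`φ⁅X,P⁆ = ⁅φX, φP⁆` for `X ∈ 𝔨`, `P ∈ 𝔭` (i.e. `A ∘ ad(X)|𝔭 ∘ A⁻¹ = ad(φ_A X)|𝔭`).
Then `φ` is a Lie algebra automorphism of `𝔤`. -/
theorem stmt8 {𝔤 : Type*} [LieRing 𝔤] [LieAlgebra ℝ 𝔤] [Module.Finite ℝ 𝔤]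
    (k p : Submodule ℝ 𝔤) (hcompl : IsCompl k p)
    (hkk : ∀ x ∈ k, ∀ y ∈ k, ⁅x, y⁆ ∈ k)
    (hkp : ∀ x ∈ k, ∀ y ∈ p, ⁅x, y⁆ ∈ p)
    (hpp : ∀ x ∈ p, ∀ y ∈ p, ⁅x, y⁆ ∈ k)
    (hB : ∀ x : 𝔤, x ≠ 0 → killingForm ℝ 𝔤 x x < 0)
    (heff : ∀ X ∈ k, (∀ P ∈ p, ⁅X, P⁆ = (0 : 𝔤)) → X = 0)
    (φ : 𝔤 ≃ₗ[ℝ] 𝔤)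
    (hφk : ∀ x ∈ k, φ x ∈ k) (hφp : ∀ x ∈ p, φ x ∈ p)
    (hφliek : ∀ x ∈ k, ∀ y ∈ k, φ ⁅x, y⁆ = ⁅φ x, φ y⁆)
    (hφorth : ∀ x ∈ p, ∀ y ∈ p, killingForm ℝ 𝔤 (φ x) (φ y) = killingForm ℝ 𝔤 x y)
    (hφint : ∀ X ∈ k, ∀ P ∈ p, φ ⁅X, P⁆ = ⁅φ X, φ P⁆) :
    ∀ x y : 𝔤, φ ⁅x, y⁆ = ⁅φ x, φ y⁆ := by
  -- φ intertwines ad X for X ∈ k, on all of 𝔤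
  have hadj : ∀ X ∈ k, ∀ w : 𝔤, φ ⁅X, w⁆ = ⁅φ X, φ w⁆ := by
    intro X hX w
    obtain ⟨wk, wp, hwk, hwp, rfl⟩ := Submodule.codisjoint_iff_exists_add_eq.mp hcompl.codisjoint w
    rw [lie_add, map_add, map_add, lie_add, hφliek X hX wk hwk, hφint X hX wp hwp]
  -- conjugation formula for ad (φ X)
  have hconj : ∀ X ∈ k, LieAlgebra.ad ℝ 𝔤 (φ X) = φ.conj (LieAlgebra.ad ℝ 𝔤 X) := by
    intro X hX
    ext w
    rw [LinearEquiv.conj_apply]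
    simp only [LieAlgebra.ad_apply, LinearMap.comp_apply, LinearEquiv.coe_coe,
      LieAlgebra.ad_apply]
    rw [hadj X hX (φ.symm w), LinearEquiv.apply_symm_apply]
  -- φ preserves the Killing form on k × k
  have hBk : ∀ X ∈ k, ∀ Y ∈ k, killingForm ℝ 𝔤 (φ X) (φ Y) = killingForm ℝ 𝔤 X Y := by
    intro X hX Y hY
    rw [killingForm_apply_apply, killingForm_apply_apply,
      hconj X hX, hconj Y hY, ← LinearEquiv.conj_comp, LinearMap.trace_conj']
  -- key identity
  have L1 : ∀ X ∈ k, ∀ P ∈ p, ∀ Q ∈ p,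
      killingForm ℝ 𝔤 ⁅φ P, φ Q⁆ (φ X) = killingForm ℝ 𝔤 ⁅P, Q⁆ X := by
    intro X hX P hP Q hQ
    have h1 : killingForm ℝ 𝔤 ⁅φ P, φ Q⁆ (φ X) = killingForm ℝ 𝔤 (φ P) ⁅φ Q, φ X⁆ :=
      LieModule.traceForm_apply_lie_apply ℝ 𝔤 𝔤 (φ P) (φ Q) (φ X)
    have h2 : killingForm ℝ 𝔤 ⁅P, Q⁆ X = killingForm ℝ 𝔤 P ⁅Q, X⁆ :=
      LieModule.traceForm_apply_lie_apply ℝ 𝔤 𝔤 P Q X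
    have h3 : ⁅φ Q, φ X⁆ = φ ⁅Q, X⁆ := by
      rw [← lie_skew, ← hadj X hX Q, ← map_neg, lie_skew]
    have h4 : (⁅Q, X⁆ : 𝔤) ∈ p := by
      rw [← lie_skew]; exact p.neg_mem (hkp X hX Q hQ)
    rw [h1, h2, h3, hφorth P hP _ h4]
  -- φ(k) = k
  have hmapk : k.map (φ : 𝔤 →ₗ[ℝ] 𝔤) = k := by
    have hle : k.map (φ : 𝔤 →ₗ[ℝ] 𝔤) ≤ k := by
      rintro _ ⟨x, hx, rfl⟩; exact hφk x hx
    have : Module.finrank ℝ (k.map (φ : 𝔤 →ₗ[ℝ] 𝔤)) = Module.finrank ℝ k :=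
      LinearEquiv.finrank_map_eq φ k
    exact Submodule.eq_of_le_of_finrank_le hle this.symm.le
  -- the p × p case
  have hppφ : ∀ P ∈ p, ∀ Q ∈ p, φ ⁅P, Q⁆ = ⁅φ P, φ Q⁆ := by
    intro P hP Q hQ
    set Z : 𝔤 := φ ⁅P, Q⁆ - ⁅φ P, φ Q⁆ with hZ
    have hZk : Z ∈ k := k.sub_mem (hφk _ (hpp P hP Q hQ)) (hpp _ (hφp P hP) _ (hφp Q hQ))
    obtain ⟨X₀, hX₀, hX₀eq⟩ : ∃ X₀ ∈ k, φ X₀ = Z := by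
      rw [← hmapk] at hZk; exact hZk
    have hzero : killingForm ℝ 𝔤 Z Z = 0 := by
      have : killingForm ℝ 𝔤 Z (φ X₀) = 0 := by
        rw [hZ, map_sub, LinearMap.sub_apply,
          hBk _ (hpp P hP Q hQ) X₀ hX₀, L1 X₀ hX₀ P hP Q hQ, sub_self]
      rwa [hX₀eq] at this
    by_contra hne
    have hZne : Z ≠ 0 := fun h => hne (sub_eq_zero.mp h)
    exact absurd hzero (ne_of_lt (hB Z hZne))
  -- conclude in general by bilinearity
  intro x y
  obtain ⟨xk, xp, hxk, hxp, rfl⟩ := Submodule.codisjoint_iff_exists_add_eq.mp hcompl.codisjoint x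
  obtain ⟨yk, yp, hyk, hyp, rfl⟩ := Submodule.codisjoint_iff_exists_add_eq.mp hcompl.codisjoint y
  have hpk : φ ⁅xp, yk⁆ = ⁅φ xp, φ yk⁆ := by
    rw [← lie_skew xp yk, map_neg, hφint yk hyk xp hxp, lie_skew]
  simp only [add_lie, lie_add, map_add]
  rw [hφliek xk hxk yk hyk, hφint xk hxk yp hyp, hpk, hppφ xp hxp yp hyp]
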